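/- For every η ∈ ℝ³ ∖ {0} and every α ∈ {1,2,3} the identity P^∓(η)·s^α·P^±(η) = ±2‖η‖·P^∓(η)·(∂P^±/∂η_α)(η) holds (with matching upper/lower choices of signs). -/

import Mathlib

open Matrix

noncomputable section

/-- The three Pauli matrices. -/
def pauli : Fin 3 → Matrix (Fin 2) (Fin 2) ℂ
  | 0 => !![0, 1; 1, 0]
  | 1 => !![0, -Complex.I; Complex.I, 0]
  | 2 => !![1, 0; 0, -1]

/-- The Euclidean norm on `ℝ³` (presented as `Fin 3 → ℝ`). -/
def enorm3 (η : Fin 3 → ℝ) : ℝ := Real.sqrt (∑ i, η i ^ 2)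

/-- `σ(η) = η₁ s¹ + η₂ s² + η₃ s³`. -/
def pauliSigma (η : Fin 3 → ℝ) : Matrix (Fin 2) (Fin 2) ℂ :=
  ∑ i, (η i : ℂ) • pauli i

/-- The spectral projections `P^±(η) = (1/2)(I ± σ(η)/‖η‖)`; `s = 1` gives `P⁺`,
`s = -1` gives `P⁻`. -/
def specProj (s : ℝ) (η : Fin 3 → ℝ) : Matrix (Fin 2) (Fin 2) ℂ :=
  (2⁻¹ : ℂ) • ((1 : Matrix (Fin 2) (Fin 2) ℂ) + ((s / enorm3 η : ℝ) : ℂ) • pauliSigma η)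

set_option maxHeartbeats 1000000

lemma pauliSigma_update (η : Fin 3 → ℝ) (α : Fin 3) (t : ℝ) :
    pauliSigma (Function.update η α t) = pauliSigma η + ((t - η α : ℝ) : ℂ) • pauli α := by
  unfold pauliSigma
  ext i j
  fin_cases α <;>
    simp [Fin.sum_univ_three, Function.update, Matrix.add_apply, Matrix.smul_apply,
      smul_eq_mul] <;> push_cast <;> ring

lemma enorm3_pos (η : Fin 3 → ℝ) (hη : η ≠ 0) : 0 < enorm3 η := by
  rw [enorm3, Real.sqrt_pos]
  obtain ⟨k, hk⟩ := Function.ne_iff.mp hη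
  exact Finset.sum_pos' (fun i _ => sq_nonneg _)
    ⟨k, Finset.mem_univ k, (sq_nonneg _).lt_of_ne (Ne.symm (pow_ne_zero 2 hk))⟩

lemma sum_sq_update (η : Fin 3 → ℝ) (α : Fin 3) (t : ℝ) :
    ∑ i, (Function.update η α t i) ^ 2 = t ^ 2 + (∑ i, η i ^ 2 - η α ^ 2) := by
  fin_cases α <;> simp [Fin.sum_univ_three, Function.update] <;> ring

lemma hasDerivAt_entry (η : Fin 3 → ℝ) (hη : η ≠ 0) (s : ℝ) (α : Fin 3) (i j : Fin 2) :
    HasDerivAt (fun t : ℝ => specProj s (Function.update η α t) i j)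
      ((2⁻¹ : ℂ) * (((-(s * η α) / enorm3 η ^ 3 : ℝ) : ℂ) * pauliSigma η i j
        + ((s / enorm3 η : ℝ) : ℂ) * pauli α i j)) (η α) := by
  have hn : 0 < enorm3 η := enorm3_pos η hη
  have hne : enorm3 η ≠ 0 := hn.ne'
  have hQ : 0 < ∑ k, η k ^ 2 := by rw [enorm3, Real.sqrt_pos] at hn; exact hn
  have hg : HasDerivAt (fun t : ℝ => ∑ k, (Function.update η α t k) ^ 2) (2 * η α) (η α) := by
    have h : (fun t : ℝ => ∑ k, (Function.update η α t k) ^ 2)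
        = fun t : ℝ => t ^ 2 + (∑ k, η k ^ 2 - η α ^ 2) := by
      funext t; exact sum_sq_update η α t
    rw [h]
    simpa using (hasDerivAt_pow 2 (η α)).add_const (∑ k, η k ^ 2 - η α ^ 2)
  have hgx : (∑ k, (Function.update η α (η α) k) ^ 2) = ∑ k, η k ^ 2 := by
    rw [Function.update_eq_self]
  have hN : HasDerivAt (fun t : ℝ => enorm3 (Function.update η α t)) (η α / enorm3 η) (η α) := by
    have h := hg.sqrt (by rw [hgx]; exact hQ.ne')
    simp only [enorm3]
    convert h using 1
    rw [hgx, show Real.sqrt (∑ k, η k ^ 2) = enorm3 η from rfl]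
    field_simp
  have hNx : enorm3 (Function.update η α (η α)) = enorm3 η := by
    rw [Function.update_eq_self]
  have hu : HasDerivAt (fun t : ℝ => s / enorm3 (Function.update η α t))
      (-(s * η α) / enorm3 η ^ 3) (η α) := by
    have h := (hasDerivAt_const (η α) s).div hN (by rw [hNx]; exact hne)
    convert h using 1
    · rfl
    · rfl
    · rfl
    rw [hNx]
    field_simp
    ring
  have hv : HasDerivAt (fun t : ℝ => pauliSigma η i j + ((t - η α : ℝ) : ℂ) * pauli α i j)
      (pauli α i j) (η α) := by
    have h1 : HasDerivAt (fun t : ℝ => ((t - η α : ℝ) : ℂ)) 1 (η α) := by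
      simpa using ((hasDerivAt_id (η α)).sub_const (η α)).ofReal_comp
    simpa using (h1.mul_const (pauli α i j)).const_add (pauliSigma η i j)
  have key : (fun t : ℝ => specProj s (Function.update η α t) i j)
      = fun t : ℝ => (2⁻¹ : ℂ) * ((1 : Matrix (Fin 2) (Fin 2) ℂ) i j
        + ((s / enorm3 (Function.update η α t) : ℝ) : ℂ)
          * (pauliSigma η i j + ((t - η α : ℝ) : ℂ) * pauli α i j)) := by
    funext t
    rw [specProj, pauliSigma_update η α t]
    simp only [Matrix.add_apply, Matrix.smul_apply, smul_eq_mul]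
    try ring
  rw [key]
  have h2 := ((hu.ofReal_comp).mul hv).const_add ((1 : Matrix (Fin 2) (Fin 2) ℂ) i j)
  have h3 := h2.const_mul (2⁻¹ : ℂ)
  convert h3 using 1
  · rfl
  · rfl
  rw [hNx]
  push_cast
  ring

lemma key_algebra (S A : Matrix (Fin 2) (Fin 2) ℂ) (a r s : ℂ) (hr : r ≠ 0)
    (hs : s = 1 ∨ s = -1)
    (h1 : A * S + S * A = (2 * a) • (1 : Matrix (Fin 2) (Fin 2) ℂ))
    (h2 : S * S = (r ^ 2) • (1 : Matrix (Fin 2) (Fin 2) ℂ)) :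
    ((2⁻¹ : ℂ) • ((1 : Matrix (Fin 2) (Fin 2) ℂ) + (-s / r) • S)) * A *
        ((2⁻¹ : ℂ) • ((1 : Matrix (Fin 2) (Fin 2) ℂ) + (s / r) • S)) =
      (s * (2 * r)) • (((2⁻¹ : ℂ) • ((1 : Matrix (Fin 2) (Fin 2) ℂ) + (-s / r) • S)) *
        ((2⁻¹ : ℂ) • ((-(s * a) / r ^ 3) • S + (s / r) • A))) := by
  have hAS : A * S = (2 * a) • (1 : Matrix (Fin 2) (Fin 2) ℂ) - S * A := eq_sub_of_add_eq h1
  rcases hs with h | h <;> subst h <;>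
  · simp only [mul_add, add_mul, mul_one, one_mul, smul_mul_assoc, mul_smul_comm, smul_add,
      smul_smul, smul_sub, mul_assoc]
    rw [hAS]
    simp only [mul_sub, mul_smul_comm, mul_one, ← mul_assoc, h2, smul_mul_assoc, one_mul,
      smul_sub, smul_smul]
    match_scalars
    all_goals field_simp [hr]
    all_goals try ring
    all_goals try rw [inv_pow, mul_inv_cancel₀ (pow_ne_zero 2 hr)]
    all_goals try rw [div_eq_one_iff_eq (by simp [hr])]
    all_goals try ring

lemma anticomm (η : Fin 3 → ℝ) (α : Fin 3) :
    pauli α * pauliSigma η + pauliSigma η * pauli α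
      = (2 * (η α : ℂ)) • (1 : Matrix (Fin 2) (Fin 2) ℂ) := by
  ext i j
  fin_cases α <;> fin_cases i <;> fin_cases j <;>
    simp [pauli, pauliSigma, Fin.sum_univ_three, Matrix.mul_apply, Fin.sum_univ_two,
      Matrix.one_apply, Matrix.smul_apply, Matrix.add_apply, smul_eq_mul, Complex.I_sq] <;>
    ring_nf <;> simp [Complex.I_sq] <;> try ring

lemma sigma_sq (η : Fin 3 → ℝ) (hη : η ≠ 0) :
    pauliSigma η * pauliSigma η
      = (((enorm3 η : ℝ) : ℂ) ^ 2) • (1 : Matrix (Fin 2) (Fin 2) ℂ) := by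
  have hr2 : ((enorm3 η : ℝ) : ℂ) ^ 2 = (η 0 : ℂ) ^ 2 + (η 1 : ℂ) ^ 2 + (η 2 : ℂ) ^ 2 := by
    have h : (enorm3 η) ^ 2 = ∑ k, η k ^ 2 := Real.sq_sqrt (by positivity)
    rw [Fin.sum_univ_three] at h
    exact_mod_cast h
  rw [hr2]
  ext i j
  fin_cases i <;> fin_cases j <;>
    simp [pauli, pauliSigma, Fin.sum_univ_three, Matrix.mul_apply, Fin.sum_univ_two,
      Matrix.one_apply, Matrix.smul_apply, Matrix.add_apply, smul_eq_mul, Complex.I_sq] <;>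
    ring_nf <;> simp [Complex.I_sq] <;> ring

/-- `P^∓(η) s^α P^±(η) = ±2‖η‖ P^∓(η) ∂P^±/∂η_α(η)`, where the matrix `D` is the
partial derivative of `η ↦ P^±(η)` in the direction `η_α`. -/
theorem specProj_pauli_specProj (η : Fin 3 → ℝ) (hη : η ≠ 0)
    (s : ℝ) (hs : s = 1 ∨ s = -1) (α : Fin 3)
    (D : Matrix (Fin 2) (Fin 2) ℂ)
    (hD : ∀ i j : Fin 2,
      HasDerivAt (fun t : ℝ => specProj s (Function.update η α t) i j) (D i j) (η α)) :
    specProj (-s) η * pauli α * specProj s η =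
      ((s * (2 * enorm3 η) : ℝ) : ℂ) • (specProj (-s) η * D) := by
  have hn : 0 < enorm3 η := enorm3_pos η hη
  have hrne : ((enorm3 η : ℝ) : ℂ) ≠ 0 := by exact_mod_cast hn.ne'
  have hDE : D = (2⁻¹ : ℂ) • (((-(s * η α) / enorm3 η ^ 3 : ℝ) : ℂ) • pauliSigma η
      + ((s / enorm3 η : ℝ) : ℂ) • pauli α) := by
    ext i j
    have h := (hD i j).unique (hasDerivAt_entry η hη s α i j)
    rw [h]
    simp [Matrix.smul_apply, Matrix.add_apply, smul_eq_mul]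
  subst hDE
  have hss : (s : ℂ) = 1 ∨ (s : ℂ) = -1 := by
    rcases hs with h | h <;> [left; right] <;> rw [h] <;> norm_num
  have hkey := key_algebra (pauliSigma η) (pauli α) (η α : ℂ) ((enorm3 η : ℝ) : ℂ) (s : ℂ)
    hrne hss (anticomm η α) (sigma_sq η hη)
  rw [specProj, specProj]
  push_cast
  convert hkey using 3 <;> push_cast <;> ring
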